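/- The polyhedron P_a = {(a,b,c) ∈ ℝ³ : c ≥ 2, −2a + c ≥ 2, −16a − 6b + c ≥ 2, −3a − b − c ≥ −3, −b − c ≥ −3, 21a + 8b − c ≥ −3} is a polytope equal to the convex hull of the eight points (−3/8, 1, 2), (0, 1/7, 20/7), (3/8, −7/8, 11/4), (0, 0, 2), (3/7, −8/7, 20/7), (0, −1/8, 2), (0, 0, 3), (−3/7, 1, 2). (This polytope is a combinatorial cube; it is the polytope of the toric threefold X_{P_a} whose quotient by S₃ is the exceptional divisor D_{3A₂} of the Kirwan blowup.) -/

import Mathlib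

/-- Helper: a point written as an explicit convex combination of four members of a set
lies in the convex hull of the set. -/
lemma mem4 {s : Set (Fin 3 → ℝ)} {v0 v1 v2 v3 : Fin 3 → ℝ} {p : Fin 3 → ℝ}
    {w0 w1 w2 w3 : ℝ}
    (h0 : v0 ∈ s) (h1 : v1 ∈ s) (h2 : v2 ∈ s) (h3 : v3 ∈ s)
    (hw0 : 0 ≤ w0) (hw1 : 0 ≤ w1) (hw2 : 0 ≤ w2) (hw3 : 0 ≤ w3)
    (hsum : w0 + w1 + w2 + w3 = 1)
    (hp : p = w0 • v0 + w1 • v1 + w2 • v2 + w3 • v3) :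
    p ∈ convexHull ℝ s := by
  have hc : Convex ℝ (convexHull ℝ s) := convex_convexHull ℝ s
  have key := hc.sum_mem (t := (Finset.univ : Finset (Fin 4)))
      (w := ![w0, w1, w2, w3]) (z := ![v0, v1, v2, v3])
      (by intro i _; fin_cases i <;> simpa)
      (by simp [Fin.sum_univ_four]; linarith)
      (by intro i _; fin_cases i <;> simp <;>
          [exact subset_convexHull ℝ s h0; exact subset_convexHull ℝ s h1;
           exact subset_convexHull ℝ s h2; exact subset_convexHull ℝ s h3])
  simpa [Fin.sum_univ_four, hp] using key

/-- The polyhedron P_a ⊂ ℝ³ of the toric threefold X_{P_a} (whose quotient by S₃ is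
the exceptional divisor D_{3A₂} of the Kirwan blowup) is the convex hull of the eight
listed vertices; in particular it is a polytope (a combinatorial cube). -/
theorem kirwan_toric_polytope :
    {p : Fin 3 → ℝ |
        p 2 ≥ 2 ∧
        -2 * p 0 + p 2 ≥ 2 ∧
        -16 * p 0 - 6 * p 1 + p 2 ≥ 2 ∧
        -3 * p 0 - p 1 - p 2 ≥ -3 ∧
        -p 1 - p 2 ≥ -3 ∧
        21 * p 0 + 8 * p 1 - p 2 ≥ -3} =
      convexHull ℝ
        ({![-3/8, 1, 2], ![0, 1/7, 20/7], ![3/8, -7/8, 11/4], ![0, 0, 2],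
          ![3/7, -8/7, 20/7], ![0, -1/8, 2], ![0, 0, 3], ![-3/7, 1, 2]} :
          Set (Fin 3 → ℝ)) := by
  apply Set.Subset.antisymm
  · -- P ⊆ convexHull
    rintro p ⟨h1, h2, h3, h4, h5, h6⟩
    rcases le_total (-2 : ℝ) (18 * p 0 + 6 * p 1 - p 2) with hs | hs
    · -- tet (3,1,2,4)
      refine mem4 (v0 := ![0, 0, 2]) (v1 := ![0, 1/7, 20/7]) (v2 := ![3/8, -7/8, 11/4]) (v3 := ![3/7, -8/7, 20/7])
        (w0 := ((-3) * p 0 + (-1) * p 1 + (-1) * p 2 + 3 : ℝ)) (w1 := ((-7/3) * p 0 + (7/6) * p 2 + (-7/3) : ℝ))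
        (w2 := (24 * p 0 + 8 * p 1 + (-4/3) * p 2 + (8/3) : ℝ)) (w3 := ((-56/3) * p 0 + (-7) * p 1 + (7/6) * p 2 + (-7/3) : ℝ))
        (Set.mem_insert_of_mem _ (Set.mem_insert_of_mem _ (Set.mem_insert_of_mem _ (Set.mem_insert _ _)))) (Set.mem_insert_of_mem _ (Set.mem_insert _ _)) (Set.mem_insert_of_mem _ (Set.mem_insert_of_mem _ (Set.mem_insert _ _))) (Set.mem_insert_of_mem _ (Set.mem_insert_of_mem _ (Set.mem_insert_of_mem _ (Set.mem_insert_of_mem _ (Set.mem_insert _ _)))))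
        (by linarith) (by linarith) (by linarith) (by linarith)
        (by ring) ?_
      funext i; fin_cases i <;> simp [Matrix.cons_val_zero, Matrix.cons_val_one, Matrix.head_cons] <;> ring
    · rcases le_total (0 : ℝ) (p 0) with ha | ha
      · rcases le_total (0 : ℝ) (8 * p 0 + 3 * p 1) with hb | hb
        · -- tet (3,1,4,6)
          refine mem4 (v0 := ![0, 0, 2]) (v1 := ![0, 1/7, 20/7]) (v2 := ![3/7, -8/7, 20/7]) (v3 := ![0, 0, 3])
            (w0 := ((-3) * p 0 + (-1) * p 1 + (-1) * p 2 + 3 : ℝ)) (w1 := ((56/3) * p 0 + 7 * p 1 : ℝ))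
            (w2 := ((7/3) * p 0 : ℝ)) (w3 := ((-18) * p 0 + (-6) * p 1 + 1 * p 2 + (-2) : ℝ))
            (Set.mem_insert_of_mem _ (Set.mem_insert_of_mem _ (Set.mem_insert_of_mem _ (Set.mem_insert _ _)))) (Set.mem_insert_of_mem _ (Set.mem_insert _ _)) (Set.mem_insert_of_mem _ (Set.mem_insert_of_mem _ (Set.mem_insert_of_mem _ (Set.mem_insert_of_mem _ (Set.mem_insert _ _))))) (Set.mem_insert_of_mem _ (Set.mem_insert_of_mem _ (Set.mem_insert_of_mem _ (Set.mem_insert_of_mem _ (Set.mem_insert_of_mem _ (Set.mem_insert_of_mem _ (Set.mem_insert _ _)))))))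
            (by linarith) (by linarith) (by linarith) (by linarith)
            (by ring) ?_
          funext i; fin_cases i <;> simp [Matrix.cons_val_zero, Matrix.cons_val_one, Matrix.head_cons] <;> ring
        · -- tet (3,5,4,6)
          refine mem4 (v0 := ![0, 0, 2]) (v1 := ![0, -1/8, 2]) (v2 := ![3/7, -8/7, 20/7]) (v3 := ![0, 0, 3])
            (w0 := (21 * p 0 + 8 * p 1 + (-1) * p 2 + 3 : ℝ)) (w1 := ((-64/3) * p 0 + (-8) * p 1 : ℝ))
            (w2 := ((7/3) * p 0 : ℝ)) (w3 := ((-2) * p 0 + 1 * p 2 + (-2) : ℝ))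
            (Set.mem_insert_of_mem _ (Set.mem_insert_of_mem _ (Set.mem_insert_of_mem _ (Set.mem_insert _ _)))) (Set.mem_insert_of_mem _ (Set.mem_insert_of_mem _ (Set.mem_insert_of_mem _ (Set.mem_insert_of_mem _ (Set.mem_insert_of_mem _ (Set.mem_insert _ _)))))) (Set.mem_insert_of_mem _ (Set.mem_insert_of_mem _ (Set.mem_insert_of_mem _ (Set.mem_insert_of_mem _ (Set.mem_insert _ _))))) (Set.mem_insert_of_mem _ (Set.mem_insert_of_mem _ (Set.mem_insert_of_mem _ (Set.mem_insert_of_mem _ (Set.mem_insert_of_mem _ (Set.mem_insert_of_mem _ (Set.mem_insert _ _)))))))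
            (by linarith) (by linarith) (by linarith) (by linarith)
            (by ring) ?_
          funext i; fin_cases i <;> simp [Matrix.cons_val_zero, Matrix.cons_val_one, Matrix.head_cons] <;> ring
      · rcases le_total (0 : ℝ) (7 * p 0 + 3 * p 1) with hc | hc
        · rcases le_total (0 : ℝ) (8 * p 0 + 3 * p 1) with hb | hb
          · -- tet (3,0,1,6)
            refine mem4 (v0 := ![0, 0, 2]) (v1 := ![-3/8, 1, 2]) (v2 := ![0, 1/7, 20/7]) (v3 := ![0, 0, 3])
              (w0 := ((-1) * p 1 + (-1) * p 2 + 3 : ℝ)) (w1 := ((-8/3) * p 0 : ℝ))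
              (w2 := ((56/3) * p 0 + 7 * p 1 : ℝ)) (w3 := ((-16) * p 0 + (-6) * p 1 + 1 * p 2 + (-2) : ℝ))
              (Set.mem_insert_of_mem _ (Set.mem_insert_of_mem _ (Set.mem_insert_of_mem _ (Set.mem_insert _ _)))) (Set.mem_insert _ _) (Set.mem_insert_of_mem _ (Set.mem_insert _ _)) (Set.mem_insert_of_mem _ (Set.mem_insert_of_mem _ (Set.mem_insert_of_mem _ (Set.mem_insert_of_mem _ (Set.mem_insert_of_mem _ (Set.mem_insert_of_mem _ (Set.mem_insert _ _)))))))
              (by linarith) (by linarith) (by linarith) (by linarith)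
              (by ring) ?_
            funext i; fin_cases i <;> simp [Matrix.cons_val_zero, Matrix.cons_val_one, Matrix.head_cons] <;> ring
          · -- tet (3,0,6,7)
            refine mem4 (v0 := ![0, 0, 2]) (v1 := ![-3/8, 1, 2]) (v2 := ![0, 0, 3]) (v3 := ![-3/7, 1, 2])
              (w0 := ((-1) * p 1 + (-1) * p 2 + 3 : ℝ)) (w1 := ((56/3) * p 0 + 8 * p 1 : ℝ))
              (w2 := (1 * p 2 + (-2) : ℝ)) (w3 := ((-56/3) * p 0 + (-7) * p 1 : ℝ))
              (Set.mem_insert_of_mem _ (Set.mem_insert_of_mem _ (Set.mem_insert_of_mem _ (Set.mem_insert _ _)))) (Set.mem_insert _ _) (Set.mem_insert_of_mem _ (Set.mem_insert_of_mem _ (Set.mem_insert_of_mem _ (Set.mem_insert_of_mem _ (Set.mem_insert_of_mem _ (Set.mem_insert_of_mem _ (Set.mem_insert _ _))))))) (Set.mem_insert_of_mem _ (Set.mem_insert_of_mem _ (Set.mem_insert_of_mem _ (Set.mem_insert_of_mem _ (Set.mem_insert_of_mem _ (Set.mem_insert_of_mem _ (Set.mem_insert_of_mem _ (rfl)))))))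)
              (by linarith) (by linarith) (by linarith) (by linarith)
              (by ring) ?_
            funext i; fin_cases i <;> simp [Matrix.cons_val_zero, Matrix.cons_val_one, Matrix.head_cons] <;> ring
        · -- tet (3,5,6,7)
          refine mem4 (v0 := ![0, 0, 2]) (v1 := ![0, -1/8, 2]) (v2 := ![0, 0, 3]) (v3 := ![-3/7, 1, 2])
            (w0 := (21 * p 0 + 8 * p 1 + (-1) * p 2 + 3 : ℝ)) (w1 := ((-56/3) * p 0 + (-8) * p 1 : ℝ))
            (w2 := (1 * p 2 + (-2) : ℝ)) (w3 := ((-7/3) * p 0 : ℝ))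
            (Set.mem_insert_of_mem _ (Set.mem_insert_of_mem _ (Set.mem_insert_of_mem _ (Set.mem_insert _ _)))) (Set.mem_insert_of_mem _ (Set.mem_insert_of_mem _ (Set.mem_insert_of_mem _ (Set.mem_insert_of_mem _ (Set.mem_insert_of_mem _ (Set.mem_insert _ _)))))) (Set.mem_insert_of_mem _ (Set.mem_insert_of_mem _ (Set.mem_insert_of_mem _ (Set.mem_insert_of_mem _ (Set.mem_insert_of_mem _ (Set.mem_insert_of_mem _ (Set.mem_insert _ _))))))) (Set.mem_insert_of_mem _ (Set.mem_insert_of_mem _ (Set.mem_insert_of_mem _ (Set.mem_insert_of_mem _ (Set.mem_insert_of_mem _ (Set.mem_insert_of_mem _ (Set.mem_insert_of_mem _ (rfl))))))))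
            (by linarith) (by linarith) (by linarith) (by linarith)
            (by ring) ?_
          funext i; fin_cases i <;> simp [Matrix.cons_val_zero, Matrix.cons_val_one, Matrix.head_cons] <;> ring
  · -- convexHull ⊆ P
    apply convexHull_min
    · intro x hx
      simp only [Set.mem_insert_iff, Set.mem_singleton_iff] at hx
      rcases hx with h | h | h | h | h | h | h | h <;> subst h <;>
        refine ⟨by norm_num [Matrix.cons_val_two, Matrix.head_cons, Matrix.tail_cons], by norm_num [Matrix.cons_val_two, Matrix.head_cons, Matrix.tail_cons], by norm_num [Matrix.cons_val_two, Matrix.head_cons, Matrix.tail_cons], by norm_num [Matrix.cons_val_two, Matrix.head_cons, Matrix.tail_cons], by norm_num [Matrix.cons_val_two, Matrix.head_cons, Matrix.tail_cons], by norm_num [Matrix.cons_val_two, Matrix.head_cons, Matrix.tail_cons]⟩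
    · intro x hx y hy a b ha hb hab
      obtain ⟨hx1, hx2, hx3, hx4, hx5, hx6⟩ := hx
      obtain ⟨hy1, hy2, hy3, hy4, hy5, hy6⟩ := hy
      have e0 : (a • x + b • y) 0 = a * x 0 + b * y 0 := by simp
      have e1 : (a • x + b • y) 1 = a * x 1 + b * y 1 := by simp
      have e2 : (a • x + b • y) 2 = a * x 2 + b * y 2 := by simp
      refine ⟨?_, ?_, ?_, ?_, ?_, ?_⟩ <;> rw [ge_iff_le] <;> simp only [e0, e1, e2]
      · linarith [mul_le_mul_of_nonneg_left hx1 ha, mul_le_mul_of_nonneg_left hy1 hb]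
      · linarith [mul_le_mul_of_nonneg_left hx2 ha, mul_le_mul_of_nonneg_left hy2 hb]
      · linarith [mul_le_mul_of_nonneg_left hx3 ha, mul_le_mul_of_nonneg_left hy3 hb]
      · linarith [mul_le_mul_of_nonneg_left hx4 ha, mul_le_mul_of_nonneg_left hy4 hb]
      · linarith [mul_le_mul_of_nonneg_left hx5 ha, mul_le_mul_of_nonneg_left hy5 hb]
      · linarith [mul_le_mul_of_nonneg_left hx6 ha, mul_le_mul_of_nonneg_left hy6 hb]
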